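/- Let 𝔉 be a subgroup-closed formation, G a finite group, H a K𝔉-subnormal subgroup of G, and L any subgroup of G. Then H ∩ L is K𝔉-subnormal in L. -/
import Mathlib


universe u

/-- A class of groups is subgroup-closed if it is closed under taking subgroups. -/
def IsSubgroupClosed (F : ∀ (G : Type u) [Group G], Prop) : Prop :=
  ∀ (G : Type u) [Group G] (H : Subgroup G), F G → F H

/-- A formation: a class of groups closed under isomorphisms, quotients and
subdirect products. -/
structure IsFormation (F : ∀ (G : Type u) [Group G], Prop) : Prop where
  iso : ∀ (G H : Type u) [Group G] [Group H], G ≃* H → F G → F H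
  quot : ∀ (G : Type u) [Group G] (N : Subgroup G) (_ : N.Normal), F G → F (G ⧸ N)
  subdirect : ∀ (G : Type u) [Group G] (N₁ N₂ : Subgroup G) (_ : N₁.Normal) (_ : N₂.Normal),
    F (G ⧸ N₁) → F (G ⧸ N₂) → N₁ ⊓ N₂ = ⊥ → F G

/-- The 𝔉-fResidual of `G`: the smallest normal subgroup with quotient in `F`. -/
def fResidual (F : ∀ (G : Type u) [Group G], Prop) (G : Type u) [Group G] : Subgroup G :=
  sInf {N : Subgroup G | ∃ _ : N.Normal, F (G ⧸ N)}

/-- `KSubnormal F H K` : there is a chain `H = H₀ ≤ … ≤ Hₙ = K` of subgroups of `G`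
such that each `Hᵢ` is normal in `Hᵢ₊₁` or contains the `F`-fResidual of `Hᵢ₊₁`. -/
inductive KSubnormal (F : ∀ (G : Type u) [Group G], Prop) {G : Type u} [Group G] :
    Subgroup G → Subgroup G → Prop
  | refl (H : Subgroup G) : KSubnormal F H H
  | step {H K L : Subgroup G} : KSubnormal F H K → K ≤ L →
      ((K.subgroupOf L).Normal ∨ fResidual F ↥L ≤ K.subgroupOf L) → KSubnormal F H L

/-- `M` is a modular element of the subgroup lattice of `G`. -/
def IsModularSubgroup {G : Type u} [Group G] (M : Subgroup G) : Prop :=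
  (∀ X Y : Subgroup G, X ≤ Y → (X ⊔ M) ⊓ Y = X ⊔ (M ⊓ Y)) ∧
  (∀ X Y : Subgroup G, M ≤ Y → (M ⊔ X) ⊓ Y = M ⊔ (X ⊓ Y))

/-- `Submodular H K` : a chain from `H` to `K` with each term modular in the next. -/
inductive Submodular {G : Type u} [Group G] : Subgroup G → Subgroup G → Prop
  | refl (H : Subgroup G) : Submodular H H
  | step {H K L : Subgroup G} : Submodular H K → K ≤ L →
      IsModularSubgroup (K.subgroupOf L) → Submodular H L

/-- `SubnormalIn H K` : a chain from `H` to `K` with each term normal in the next. -/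
inductive SubnormalIn {G : Type u} [Group G] : Subgroup G → Subgroup G → Prop
  | refl (H : Subgroup G) : SubnormalIn H H
  | step {H K L : Subgroup G} : SubnormalIn H K → K ≤ L →
      (K.subgroupOf L).Normal → SubnormalIn H L

/-- A group is supersolvable if it has a normal series with cyclic factors:
each term is normal in `G` and each successive term is generated by the previous
one together with a single element. -/
def IsSupersolvable (G : Type u) [Group G] : Prop :=
  ∃ (n : ℕ) (s : Fin (n + 1) → Subgroup G), s 0 = ⊥ ∧ s (Fin.last n) = ⊤ ∧
    (∀ i, (s i).Normal) ∧
    ∀ i : Fin n, ∃ g : G, s i.succ = s i.castSucc ⊔ Subgroup.zpowers g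

/-- The class 𝔘₁ of supersolvable groups of square-free exponent. -/
def U1 : ∀ (G : Type u) [Group G], Prop := fun G _ =>
  IsSupersolvable G ∧ Squarefree (Monoid.exponent G)

/-- The solvable radical: the largest normal solvable subgroup. -/
def solvRad (G : Type u) [Group G] : Subgroup G :=
  sSup {N : Subgroup G | N.Normal ∧ IsSolvable ↥N}

/-- The Fitting subgroup: the largest normal nilpotent subgroup. -/
def fitting (G : Type u) [Group G] : Subgroup G :=
  sSup {N : Subgroup G | N.Normal ∧ Group.IsNilpotent ↥N}

section Aux

variable (F : ∀ (G : Type u) [Group G], Prop)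

/-- The defining set for `fResidual` is closed under binary intersection. -/
lemma aux_inf_mem (hF : IsFormation F) {G : Type u} [Group G] (N₁ N₂ : Subgroup G)
    (h₁ : N₁.Normal) (h₂ : N₂.Normal) (f₁ : F (G ⧸ N₁)) (f₂ : F (G ⧸ N₂)) :
    F (G ⧸ (N₁ ⊓ N₂)) := by
  set π := QuotientGroup.mk' (N₁ ⊓ N₂) with hπ
  have hsurj : Function.Surjective π := QuotientGroup.mk'_surjective _
  have hker : π.ker = N₁ ⊓ N₂ := QuotientGroup.ker_mk' _
  set N₁' := N₁.map π
  set N₂' := N₂.map π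
  have hn₁ : N₁'.Normal := Subgroup.Normal.map h₁ π hsurj
  have hn₂ : N₂'.Normal := Subgroup.Normal.map h₂ π hsurj
  have e₁ : (G ⧸ (N₁ ⊓ N₂)) ⧸ N₁' ≃* G ⧸ N₁ :=
    QuotientGroup.quotientQuotientEquivQuotient (N₁ ⊓ N₂) N₁ inf_le_left
  have e₂ : (G ⧸ (N₁ ⊓ N₂)) ⧸ N₂' ≃* G ⧸ N₂ :=
    QuotientGroup.quotientQuotientEquivQuotient (N₁ ⊓ N₂) N₂ inf_le_right
  have hbot : N₁' ⊓ N₂' = ⊥ := by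
    have hc : (N₁' ⊓ N₂').comap π = N₁ ⊓ N₂ := by
      rw [Subgroup.comap_inf, Subgroup.comap_map_eq, Subgroup.comap_map_eq, hker,
        sup_of_le_left inf_le_left, sup_of_le_left inf_le_right]
    have h2 := congrArg (Subgroup.map π) hc
    rw [Subgroup.map_comap_eq_self_of_surjective hsurj] at h2
    exact h2.trans ((Subgroup.map_eq_bot_iff _).2 hker.ge)
  exact hF.subdirect _ N₁' N₂' hn₁ hn₂ (hF.iso _ _ e₁.symm f₁) (hF.iso _ _ e₂.symm f₂) hbot

/-- For a finite group with nonempty defining set, the residual itself lies in the set. -/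
lemma aux_fResidual_mem (hF : IsFormation F) {G : Type u} [Group G] [Finite G]
    (hne : ∃ N : Subgroup G, ∃ _ : N.Normal, F (G ⧸ N)) :
    ∃ _ : (fResidual F G).Normal, F (G ⧸ fResidual F G) := by
  set S : Set (Subgroup G) := {N : Subgroup G | ∃ _ : N.Normal, F (G ⧸ N)} with hS
  have hSne : S.Nonempty := by obtain ⟨N, h1, h2⟩ := hne; exact ⟨N, h1, h2⟩
  have hwf : WellFoundedLT (Subgroup G) := inferInstance
  obtain ⟨m, hmS, hmin⟩ := hwf.wf.has_min S hSne
  have hmle : ∀ N ∈ S, m ≤ N := by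
    intro N hN
    obtain ⟨hnm, hfm⟩ := hmS
    obtain ⟨hnN, hfN⟩ := hN
    have hninf : (m ⊓ N).Normal := by
      constructor
      intro x hx g
      rw [Subgroup.mem_inf] at hx ⊢
      exact ⟨hnm.conj_mem x hx.1 g, hnN.conj_mem x hx.2 g⟩
    have hmem : m ⊓ N ∈ S := ⟨hninf, aux_inf_mem F hF m N hnm hnN hfm hfN⟩
    have hnl : ¬ (m ⊓ N < m) := hmin _ hmem
    have heq : m ⊓ N = m := by
      rcases lt_or_eq_of_le (inf_le_left : m ⊓ N ≤ m) with h | h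
      · exact absurd h hnl
      · exact h
    exact heq ▸ inf_le_right
  have : fResidual F G = m := le_antisymm (sInf_le hmS) (le_sInf hmle)
  rw [this]; exact hmS

/-- Residual behaves well under homomorphisms into a finite group. -/
lemma aux_fResidual_comap (hF : IsFormation F) (hsc : IsSubgroupClosed F)
    {A B : Type u} [Group A] [Group B] [Finite B] (φ : A →* B) :
    fResidual F A ≤ (fResidual F B).comap φ := by
  by_cases hne : ∃ N : Subgroup B, ∃ _ : N.Normal, F (B ⧸ N)
  · obtain ⟨hn, hq⟩ := aux_fResidual_mem F hF hne
    set R := fResidual F B with hR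
    set f : A →* B ⧸ R := (QuotientGroup.mk' R).comp φ with hf
    have hkf : f.ker = R.comap φ := by
      rw [hf, ← MonoidHom.comap_ker, QuotientGroup.ker_mk']
    have hle : fResidual F A ≤ f.ker := by
      apply sInf_le
      refine ⟨MonoidHom.normal_ker f, ?_⟩
      have e := QuotientGroup.quotientKerEquivRange f
      exact hF.iso _ _ e.symm (hsc _ f.range hq)
    rwa [hkf] at hle
  · have hempty : {N : Subgroup B | ∃ _ : N.Normal, F (B ⧸ N)} = ∅ := by
      ext N
      simp only [Set.mem_setOf_eq, Set.mem_empty_iff_false, iff_false]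
      rintro ⟨h1, h2⟩
      exact hne ⟨N, h1, h2⟩
    have : fResidual F B = ⊤ := by rw [fResidual, hempty, sInf_empty]
    rw [this, Subgroup.comap_top]
    exact le_top

lemma aux_subgroupOf_inf_normal {G : Type u} [Group G] {K M : Subgroup G} (L : Subgroup G)
    (_hKM : K ≤ M) (hn : (K.subgroupOf M).Normal) :
    ((K ⊓ L).subgroupOf (M ⊓ L)).Normal := by
  constructor
  intro n hn' g
  rw [Subgroup.mem_subgroupOf] at hn' ⊢
  have hK : ((n : G) : G) ∈ K := hn'.1
  have hL : ((n : G) : G) ∈ L := hn'.2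
  constructor
  · have := hn.conj_mem ⟨(n : G), n.2.1⟩ (Subgroup.mem_subgroupOf.mpr hK)
      ⟨(g : G), g.2.1⟩
    rw [Subgroup.mem_subgroupOf] at this
    simpa using this
  · simpa using L.mul_mem (L.mul_mem g.2.2 hL) (L.inv_mem g.2.2)

lemma aux_KSubnormal_inf (hF : IsFormation F) (hsc : IsSubgroupClosed F)
    {G : Type u} [Group G] [Finite G] {H K : Subgroup G}
    (h : KSubnormal F H K) (L : Subgroup G) : KSubnormal F (H ⊓ L) (K ⊓ L) := by
  induction h with
  | refl => exact .refl _
  | @step K' M hHK hKM hcond ih =>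
    refine .step ih (inf_le_inf_right L hKM) ?_
    have hML : M ⊓ L ≤ M := inf_le_left
    have hcomap : (K'.subgroupOf M).comap (Subgroup.inclusion hML)
        = (K' ⊓ L).subgroupOf (M ⊓ L) := by
      ext x
      simp only [Subgroup.mem_comap, Subgroup.mem_subgroupOf, Subgroup.coe_inclusion,
        Subgroup.mem_inf]
      exact ⟨fun h => ⟨h, x.2.2⟩, fun h => h.1⟩
    rcases hcond with hnorm | hres
    · exact Or.inl (aux_subgroupOf_inf_normal L hKM hnorm)
    · right
      calc fResidual F ↥(M ⊓ L)
          ≤ (fResidual F ↥M).comap (Subgroup.inclusion hML) :=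
            aux_fResidual_comap F hF hsc _
        _ ≤ (K'.subgroupOf M).comap (Subgroup.inclusion hML) := Subgroup.comap_mono hres
        _ = (K' ⊓ L).subgroupOf (M ⊓ L) := hcomap

end Aux

theorem stmt3 (F : ∀ (G : Type u) [Group G], Prop) (hF : IsFormation F)
    (hsc : IsSubgroupClosed F) {G : Type u} [Group G] [Finite G] {H : Subgroup G}
    (h : KSubnormal F H ⊤) (L : Subgroup G) :
    KSubnormal F (H ⊓ L) L := by
  have := aux_KSubnormal_inf F hF hsc h L
  rwa [top_inf_eq] at this
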